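/- Let a, b be coprime positive integers and p a non-negative integer. The sum of all non-negative integers n such that ax + by = n has at most p solutions in non-negative integers equals p²a²b²/2 + p(ab - a - b)ab/2 + (a-1)(b-1)(2ab - a - b - 1)/12. -/

import Mathlib

open Finset

noncomputable def numRep2 (a b n : ℕ) : ℕ :=
  Set.ncard {xy : ℕ × ℕ | a * xy.1 + b * xy.2 = n}

def repFinset (a b n : ℕ) : Finset (ℕ × ℕ) :=
  (Finset.range (n+1) ×ˢ Finset.range (n+1)).filter (fun xy => a * xy.1 + b * xy.2 = n)

lemma mem_repFinset (a b n : ℕ) (ha : 0 < a) (hb : 0 < b) (xy : ℕ × ℕ) :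
    xy ∈ repFinset a b n ↔ a * xy.1 + b * xy.2 = n := by
  simp only [repFinset, Finset.mem_filter, Finset.mem_product, Finset.mem_range]
  constructor
  · exact fun h => h.2
  · intro h
    refine ⟨⟨?_, ?_⟩, h⟩ <;> nlinarith

lemma numRep2_eq_card (a b n : ℕ) (ha : 0 < a) (hb : 0 < b) :
    numRep2 a b n = (repFinset a b n).card := by
  rw [numRep2, ← Set.ncard_coe_finset]
  congr 1
  ext xy
  simp [mem_repFinset a b n ha hb]

lemma x_modEq (a b n : ℕ) (hab : Nat.Coprime a b) {x y x' y' : ℕ}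
    (h : a * x + b * y = n) (h' : a * x' + b * y' = n) : x ≡ x' [MOD b] := by
  rcases le_total x x' with hle | hle
  · refine (Nat.modEq_iff_dvd' hle).mpr ?_
    have hd : b ∣ a * (x' - x) := by
      have : a * (x' - x) = b * y - b * y' := by
        rw [Nat.mul_sub]
        omega
      rw [this]
      exact Nat.dvd_sub (Dvd.intro y rfl) (Dvd.intro y' rfl)
    exact (Nat.Coprime.dvd_of_dvd_mul_left (hab.symm) hd)
  · refine ((Nat.modEq_iff_dvd' hle).mpr ?_).symm
    have hd : b ∣ a * (x - x') := by
      have : a * (x - x') = b * y' - b * y := by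
        rw [Nat.mul_sub]
        omega
      rw [this]
      exact Nat.dvd_sub (Dvd.intro y' rfl) (Dvd.intro y rfl)
    exact (Nat.Coprime.dvd_of_dvd_mul_left (hab.symm) hd)

lemma numRep2_le_iff (a b p n : ℕ) (ha : 0 < a) (hb : 0 < b) (hab : Nat.Coprime a b) :
    numRep2 a b n ≤ p ↔ ∀ x y : ℕ, a * x + b * y = n → x < p * b := by
  rw [numRep2_eq_card a b n ha hb]
  constructor
  · intro hcard x y hxy
    by_contra hge
    push_neg at hge
    -- build p+1 solutions
    have hinj : (Finset.range (p+1)).card ≤ (repFinset a b n).card := by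
      apply Finset.card_le_card_of_injOn (fun k => (x - k * b, y + k * a))
      · intro k hk
        rw [Finset.mem_coe, Finset.mem_range] at hk
        have hkb : k * b ≤ x := le_trans (Nat.mul_le_mul_right b (by omega)) hge
        rw [Finset.mem_coe, mem_repFinset a b n ha hb]
        simp only
        zify [hkb]
        have hn : (a : ℤ) * x + b * y = n := by exact_mod_cast hxy
        linear_combination hn
      · intro k hk k' hk' hkk
        simp only [Prod.mk.injEq] at hkk
        have := hkk.2
        have : k * a = k' * a := by omega
        exact Nat.eq_of_mul_eq_mul_right ha this
    simp at hinj
    omega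
  · intro hall
    have : (repFinset a b n).card ≤ (Finset.range p).card := by
      apply Finset.card_le_card_of_injOn (fun xy => xy.1 / b)
      · intro xy hxy
        rw [Finset.mem_coe, mem_repFinset a b n ha hb] at hxy
        rw [Finset.mem_coe, Finset.mem_range]
        exact (Nat.div_lt_iff_lt_mul hb).mpr (hall _ _ hxy)
      · intro xy hxy xy' hxy' hdiv
        simp only [Finset.mem_coe, mem_repFinset a b n ha hb] at hxy hxy'
        have hmod : xy.1 % b = xy'.1 % b := x_modEq a b n hab hxy hxy'
        have hx : xy.1 = xy'.1 := by
          simp only at hdiv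
          calc xy.1 = b * (xy.1 / b) + xy.1 % b := (Nat.div_add_mod _ _).symm
            _ = b * (xy'.1 / b) + xy'.1 % b := by rw [hdiv, hmod]
            _ = xy'.1 := Nat.div_add_mod _ _
        have hy : xy.2 = xy'.2 := by
          rw [hx] at hxy
          have : b * xy.2 = b * xy'.2 := by omega
          exact Nat.eq_of_mul_eq_mul_left hb this
        exact Prod.ext hx hy
    simpa using this

def bucket (a b p t : ℕ) : Finset ℕ :=
  (Finset.range (p*a + a*t/b)).image (fun j => a*t + p*a*b - (j+1)*b)

def sylT (a b p : ℕ) : Finset ℕ := (Finset.range b).biUnion (bucket a b p)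

lemma bucket_mul_le {a b p t j : ℕ} (hb : 0 < b) (hj : j < p*a + a*t/b) :
    (j+1)*b ≤ a*t + p*a*b := by
  have h1 : (j+1) ≤ p*a + a*t/b := hj
  have h2 : (j+1)*b ≤ (p*a + a*t/b)*b := Nat.mul_le_mul_right b h1
  have h3 : (p*a + a*t/b)*b = p*a*b + (a*t/b)*b := by ring
  have h4 : (a*t/b)*b ≤ a*t := Nat.div_mul_le_self _ _
  omega

lemma modEq_pab (a b p t : ℕ) : a*t + p*a*b ≡ a*t [MOD b] := by
  have : p*a*b ≡ 0 [MOD b] := (Nat.modEq_zero_iff_dvd).mpr ⟨p*a, by ring⟩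
  simpa using (Nat.ModEq.refl (a*t)).add this

lemma exists_t (a b : ℕ) (hb : 0 < b) (hab : Nat.Coprime a b) (n : ℕ) :
    ∃ t, t < b ∧ a * t ≡ n [MOD b] := by
  haveI : NeZero b := ⟨hb.ne'⟩
  refine ⟨((a : ZMod b)⁻¹ * (n : ZMod b)).val, ZMod.val_lt _, ?_⟩
  have hu : IsUnit (a : ZMod b) := (ZMod.isUnit_iff_coprime a b).mpr hab
  rw [← ZMod.natCast_eq_natCast_iff]
  push_cast
  rw [ZMod.natCast_val, ZMod.cast_id, ← mul_assoc, ZMod.mul_inv_of_unit _ hu, one_mul]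

lemma setEq (a b p : ℕ) (ha : 0 < a) (hb : 0 < b) (hab : Nat.Coprime a b) :
    {n : ℕ | numRep2 a b n ≤ p} = ↑(sylT a b p) := by
  ext n
  rw [Set.mem_setOf_eq, Finset.mem_coe]
  simp only [sylT, Finset.mem_biUnion, Finset.mem_range, bucket, Finset.mem_image]
  constructor
  · intro hdp
    obtain ⟨t, ht, hmod⟩ := exists_t a b hb hab n
    have htot : a*t + p*a*b ≡ n [MOD b] := (modEq_pab a b p t).trans hmod
    have hlt : n < a*t + p*a*b := by
      by_contra hge
      push_neg at hge
      have hdvd : b ∣ n - (a*t + p*a*b) := (Nat.modEq_iff_dvd' hge).mp htot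
      obtain ⟨l, hl⟩ := hdvd
      have e1 : a*(t + p*b) + b*l = a*t + p*a*b + b*l := by ring
      have e2 : a*(t + p*b) + b*l = n := by omega
      have := (numRep2_le_iff a b p n ha hb hab).mp hdp _ _ e2
      omega
    have hdvd : b ∣ (a*t + p*a*b) - n := (Nat.modEq_iff_dvd' hlt.le).mp htot.symm
    obtain ⟨k, hk⟩ := hdvd
    have hk1 : 1 ≤ k := by
      rcases Nat.eq_zero_or_pos k with h0 | h1
      · rw [h0, mul_zero] at hk; omega
      · omega
    have hkb : k * b ≤ a*t + p*a*b := by rw [mul_comm k b]; omega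
    refine ⟨t, ht, k - 1, ?_, ?_⟩
    · have hdiv : (a*t + p*a*b)/b = a*t/b + p*a := Nat.add_mul_div_right _ _ hb
      have : k ≤ (a*t + p*a*b)/b := (Nat.le_div_iff_mul_le hb).mpr hkb
      omega
    · have hj1 : k - 1 + 1 = k := by omega
      rw [hj1, mul_comm k b]
      omega
  · rintro ⟨t, ht, j, hj, rfl⟩
    have hKb : (j+1)*b ≤ a*t + p*a*b := bucket_mul_le hb hj
    rw [numRep2_le_iff a b p _ ha hb hab]
    intro x y hxy
    by_contra hge
    push_neg at hge
    zify [hKb] at hxy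
    have hb' : (0:ℤ) < b := by exact_mod_cast hb
    have h1 : (0:ℤ) ≤ (b:ℤ)*y := by positivity
    have h2 : (b:ℤ) ≤ ((j:ℤ)+1)*b := by nlinarith [show (0:ℤ) ≤ (j:ℤ)*b by positivity]
    have expand : (a:ℤ)*((x:ℤ)-(p:ℤ)*b) = (a:ℤ)*x - (p:ℤ)*a*b := by ring
    have hgeI : ((p:ℤ))*b ≤ x := by exact_mod_cast hge
    have h3 : (a:ℤ)*((x:ℤ)-(p:ℤ)*b) < (a:ℤ)*t := by
      push_cast at hxy
      linarith
    have h4 : ((x:ℤ))-(p:ℤ)*b < (t:ℤ) := by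
      have ha' : (0:ℤ) < a := by exact_mod_cast ha
      exact lt_of_mul_lt_mul_left h3 ha'.le
    have hut : x - p*b < t := by
      have : ((x - p*b : ℕ):ℤ) < (t:ℤ) := by
        rw [Nat.cast_sub hge]; push_cast; exact h4
      exact_mod_cast this
    have e4 : a*(t - (x - p*b)) = b*(y + (j+1)) := by
      zify [hut.le, hge]
      push_cast at hxy ⊢
      linear_combination (-1 : ℤ) * hxy
    have hdvd : b ∣ (t - (x - p*b)) := hab.symm.dvd_of_dvd_mul_left ⟨y+(j+1), e4⟩
    have := Nat.le_of_dvd (by omega) hdvd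
    omega

lemma gauss (c : ℕ) : 2 * ∑ j ∈ Finset.range c, ((j:ℤ)+1) = c*(c+1) := by
  induction c with
  | zero => simp
  | succ n ih => rw [Finset.sum_range_succ, mul_add, ih]; push_cast; ring

lemma sum_id' (c : ℕ) : 2 * ∑ j ∈ Finset.range c, (j:ℤ) = c*(c-1) := by
  induction c with
  | zero => simp
  | succ n ih => rw [Finset.sum_range_succ, mul_add, ih]; push_cast; ring

lemma sum_sq' (c : ℕ) : 6 * ∑ j ∈ Finset.range c, (j:ℤ)^2 = c*(c-1)*(2*c-1) := by
  induction c with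
  | zero => simp
  | succ n ih => rw [Finset.sum_range_succ, mul_add, ih]; push_cast; ring

lemma bucket_sum (a b p t : ℕ) (hb : 0 < b) :
    2*(b:ℤ) * ∑ n ∈ bucket a b p t, (n:ℤ)
      = (p:ℤ)^2*a^2*b^2 - p*a*b^2 + (2*p*(a:ℤ)^2*b - a*b)*t + (a:ℤ)^2*t^2
        + ((b:ℤ)*((a*t % b : ℕ):ℤ) - ((a*t % b : ℕ):ℤ)^2) := by
  have hinj : ∀ x ∈ Finset.range (p*a + a*t/b), ∀ y ∈ Finset.range (p*a + a*t/b),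
      a*t + p*a*b - (x+1)*b = a*t + p*a*b - (y+1)*b → x = y := by
    intro x hx y hy hxy
    rw [Finset.mem_range] at hx hy
    have h1 := bucket_mul_le hb hx
    have h2 := bucket_mul_le hb hy
    have : (x+1)*b = (y+1)*b := by omega
    have := Nat.eq_of_mul_eq_mul_right hb this
    omega
  rw [bucket, Finset.sum_image hinj]
  have hcast : ∑ j ∈ Finset.range (p*a + a*t/b), ((a*t + p*a*b - (j+1)*b : ℕ):ℤ)
      = ∑ j ∈ Finset.range (p*a + a*t/b), (((a:ℤ)*t + p*a*b) - ((j:ℤ)+1)*b) := by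
    refine Finset.sum_congr rfl fun j hj => ?_
    rw [Finset.mem_range] at hj
    rw [Nat.cast_sub (bucket_mul_le hb hj)]
    push_cast
    ring
  rw [hcast, Finset.sum_sub_distrib, Finset.sum_const, Finset.card_range, ← Finset.sum_mul,
    nsmul_eq_mul]
  have hfr : (b:ℤ)*((a*t/b : ℕ):ℤ) = (a:ℤ)*t - ((a*t % b : ℕ):ℤ) := by
    have hnd := Nat.div_add_mod (a*t) b
    have h : ((b * (a*t/b) + a*t % b : ℕ):ℤ) = ((a*t : ℕ):ℤ) := by rw [hnd]
    rw [Nat.cast_add, Nat.cast_mul, Nat.cast_mul] at h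
    linarith
  have hg := gauss (p*a + a*t/b)
  rw [Nat.cast_add, Nat.cast_mul] at hg
  rw [Nat.cast_add, Nat.cast_mul]
  set F := ((a*t/b : ℕ):ℤ)
  set R := ((a*t % b : ℕ):ℤ)
  linear_combination (((a:ℤ)*t - b*F + R - b)) * hfr + (-(b:ℤ)^2) * hg

lemma bucket_modEq {a b p t n : ℕ} (hb : 0 < b) (hn : n ∈ bucket a b p t) :
    n ≡ a*t [MOD b] := by
  rw [bucket, Finset.mem_image] at hn
  obtain ⟨j, hj, rfl⟩ := hn
  rw [Finset.mem_range] at hj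
  have hKb := bucket_mul_le hb hj
  have h1 : a*t + p*a*b - (j+1)*b ≡ a*t + p*a*b [MOD b] := by
    apply (Nat.modEq_iff_dvd' (by omega)).mpr
    refine ⟨j+1, ?_⟩
    have e : b*(j+1) = (j+1)*b := mul_comm _ _
    omega
  exact h1.trans (modEq_pab a b p t)

lemma bucket_disj (a b p : ℕ) (hb : 0 < b) (hab : Nat.Coprime a b) :
    (↑(Finset.range b) : Set ℕ).PairwiseDisjoint (bucket a b p) := by
  intro t ht t' ht' hne
  rw [Finset.mem_coe, Finset.mem_range] at ht ht'
  rw [Function.onFun, Finset.disjoint_left]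
  intro n hn hn'
  have h1 := bucket_modEq hb hn
  have h2 := bucket_modEq hb hn'
  have h3 : a*t ≡ a*t' [MOD b] := h1.symm.trans h2
  have h4 : t % b = t' % b := Nat.ModEq.cancel_left_of_coprime hab.symm h3
  rw [Nat.mod_eq_of_lt ht, Nat.mod_eq_of_lt ht'] at h4
  exact hne h4

lemma image_mod (a b : ℕ) (hb : 0 < b) (hab : Nat.Coprime a b) :
    Finset.image (fun t => a*t % b) (Finset.range b) = Finset.range b := by
  have hinj : Set.InjOn (fun t => a*t % b) ↑(Finset.range b) := by
    intro t ht t' ht' h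
    rw [Finset.mem_coe, Finset.mem_range] at ht ht'
    have h4 : t % b = t' % b := Nat.ModEq.cancel_left_of_coprime hab.symm h
    rwa [Nat.mod_eq_of_lt ht, Nat.mod_eq_of_lt ht'] at h4
  apply Finset.eq_of_subset_of_card_le
  · intro r hr
    rw [Finset.mem_image] at hr
    obtain ⟨t, _, rfl⟩ := hr
    exact Finset.mem_range.mpr (Nat.mod_lt _ hb)
  · rw [Finset.card_image_of_injOn hinj]

lemma sum_mod_eq (a b : ℕ) (hb : 0 < b) (hab : Nat.Coprime a b) (g : ℕ → ℤ) :
    ∑ t ∈ Finset.range b, g (a*t % b) = ∑ r ∈ Finset.range b, g r := by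
  conv_rhs => rw [← image_mod a b hb hab]
  rw [Finset.sum_image]
  intro t ht t' ht' h
  rw [Finset.mem_coe, Finset.mem_range] at ht ht'
  have h4 : t % b = t' % b := Nat.ModEq.cancel_left_of_coprime hab.symm h
  rwa [Nat.mod_eq_of_lt ht, Nat.mod_eq_of_lt ht'] at h4

theorem stmt_4 (a b p : ℕ) (ha : 0 < a) (hb : 0 < b) (hab : Nat.Coprime a b) :
    12 * (∑ᶠ n ∈ {n : ℕ | numRep2 a b n ≤ p}, (n : ℤ)) =
      6 * (p : ℤ) ^ 2 * a ^ 2 * b ^ 2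
        + 6 * (p : ℤ) * ((a : ℤ) * b - a - b) * a * b
        + ((a : ℤ) - 1) * ((b : ℤ) - 1) * (2 * (a : ℤ) * b - a - b - 1) := by
  rw [setEq a b p ha hb hab, finsum_mem_coe_finset,
    show sylT a b p = (Finset.range b).biUnion (bucket a b p) from rfl,
    Finset.sum_biUnion (bucket_disj a b p hb hab)]
  refine mul_left_cancel₀ (a := 2*(b:ℤ)) (by positivity) ?_
  have hstep : 2*(b:ℤ) * (12 * ∑ t ∈ Finset.range b, ∑ n ∈ bucket a b p t, (n:ℤ))
      = ∑ t ∈ Finset.range b, 12 * (2*(b:ℤ) * ∑ n ∈ bucket a b p t, (n:ℤ)) := by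
    rw [show (2*(b:ℤ)) * (12 * ∑ t ∈ Finset.range b, ∑ n ∈ bucket a b p t, (n:ℤ))
        = 24*(b:ℤ) * ∑ t ∈ Finset.range b, ∑ n ∈ bucket a b p t, (n:ℤ) by ring]
    rw [Finset.mul_sum]
    exact Finset.sum_congr rfl fun t _ => by ring
  rw [hstep]
  have hterm : ∀ t ∈ Finset.range b, 12 * (2*(b:ℤ) * ∑ n ∈ bucket a b p t, (n:ℤ))
      = 12*((p:ℤ)^2*a^2*b^2 - p*a*b^2) + (12*(2*p*(a:ℤ)^2*b - a*b))*(t:ℤ)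
        + (12*(a:ℤ)^2)*(t:ℤ)^2
        + (12*(b:ℤ)*((a*t % b : ℕ):ℤ) - 12*((a*t % b : ℕ):ℤ)^2) := by
    intro t _
    have := bucket_sum a b p t hb
    linear_combination 12 * this
  rw [Finset.sum_congr rfl hterm]
  simp only [Finset.sum_add_distrib, Finset.sum_sub_distrib, ← Finset.mul_sum,
    Finset.sum_const, Finset.card_range, nsmul_eq_mul]
  have hm1 : ∑ t ∈ Finset.range b, ((a*t % b : ℕ):ℤ) = ∑ t ∈ Finset.range b, (t:ℤ) :=
    sum_mod_eq a b hb hab (fun r => (r:ℤ))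
  have hm2 : ∑ t ∈ Finset.range b, ((a*t % b : ℕ):ℤ)^2 = ∑ t ∈ Finset.range b, (t:ℤ)^2 :=
    sum_mod_eq a b hb hab (fun r => (r:ℤ)^2)
  rw [hm1, hm2]
  have hgauss := sum_id' b
  have hsq := sum_sq' b
  linear_combination (12*(p:ℤ)*(a:ℤ)^2*b - 6*(a:ℤ)*b + 6*(b:ℤ)) * hgauss
    + (2*(a:ℤ)^2 - 2) * hsq
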